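/- Let J^α (α = 1,2,3) be an arbitrary almost hypercomplex structure on an open set U ⊆ ℝ^{4r}, with diagonal Nijenhuis tensor N_{XY}^Z and Obata connection Γ^{Ob}_{XY}^Z. Then the torsionful connection Γ_{XY}^Z := Γ^{Ob}_{XY}^Z + N_{XY}^Z makes the complex structures covariantly constant: identically on U and for every α, ∂_X J^α_Y^Z − (Γ^{Ob} + N)_{XY}^W J^α_W^Z + (Γ^{Ob} + N)_{XW}^Z J^α_Y^W = 0. In other words, any almost hypercomplex structure admits a torsionful connection (Obata plus Nijenhuis torsion) with respect to which the three complex structures are covariantly constant. -/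

import Mathlib

noncomputable section

/-- The Levi-Civita symbol on `Fin 3`, with `ε 0 1 2 = 1`. -/
def epsLC (a b c : Fin 3) : ℝ :=
  if (a, b, c) = ((0 : Fin 3), (1 : Fin 3), (2 : Fin 3)) ∨ (a, b, c) = (1, 2, 0) ∨ (a, b, c) = (2, 0, 1) then 1
  else if (a, b, c) = (2, 1, 0) ∨ (a, b, c) = (0, 2, 1) ∨ (a, b, c) = (1, 0, 2) then -1
  else 0

/-- Partial derivative `∂_i f` of a scalar function on `ℝ^n`. -/
def pd {n : ℕ} (i : Fin n) (f : (Fin n → ℝ) → ℝ) (x : Fin n → ℝ) : ℝ :=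
  fderiv ℝ f x (Pi.single i 1)

/-- The diagonal Nijenhuis tensor `N_{XY}^Z` of a triple of (1,1)-tensor fields. -/
def nijenhuis {n : ℕ} (J : Fin 3 → Fin n → Fin n → (Fin n → ℝ) → ℝ)
    (X Y Z : Fin n) (x : Fin n → ℝ) : ℝ :=
  (1 / 12) * ∑ α, ∑ W,
    (J α X W x * (pd W (J α Y Z) x - pd Y (J α W Z) x)
      - J α Y W x * (pd W (J α X Z) x - pd X (J α W Z) x))

/-- The Obata connection `Γ^{Ob}_{XY}^Z` of a triple of (1,1)-tensor fields. -/
def obata {n : ℕ} (J : Fin 3 → Fin n → Fin n → (Fin n → ℝ) → ℝ)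
    (X Y Z : Fin n) (x : Fin n → ℝ) : ℝ :=
  -(1 / 6) * ∑ α, ∑ W,
    ((pd X (J α Y W) x + pd Y (J α X W) x
        + (1 / 2) * ∑ β, ∑ γ, epsLC α β γ *
            ((∑ u, J β X u x * pd u (J γ Y W) x) + ∑ u, J β Y u x * pd u (J γ X W) x))
      * J α W Z x)

/-- An almost hypercomplex structure on an open set `U ⊆ ℝ^n`: a smooth family of three
(1,1)-tensor fields forming at every point of `U` a quaternionic triple. -/
def IsAlmostHypercomplexOn {n : ℕ} (J : Fin 3 → Fin n → Fin n → (Fin n → ℝ) → ℝ)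
    (U : Set (Fin n → ℝ)) : Prop :=
  (∀ α X Y, ContDiffOn ℝ (⊤ : ℕ∞) (J α X Y) U) ∧
  ∀ α β X Z, ∀ x ∈ U, ∑ W, J α X W x * J β W Z x =
    (if α = β then (-1 : ℝ) else 0) * (if X = Z then 1 else 0)
      + ∑ γ, epsLC α β γ * J γ X Z x

set_option linter.unusedSectionVars false

lemma epsv000 : epsLC 0 0 0 = 0 := by simp (config := { decide := true }) [epsLC]
lemma epsv001 : epsLC 0 0 1 = 0 := by simp (config := { decide := true }) [epsLC]
lemma epsv002 : epsLC 0 0 2 = 0 := by simp (config := { decide := true }) [epsLC]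
lemma epsv010 : epsLC 0 1 0 = 0 := by simp (config := { decide := true }) [epsLC]
lemma epsv011 : epsLC 0 1 1 = 0 := by simp (config := { decide := true }) [epsLC]
lemma epsv012 : epsLC 0 1 2 = 1 := by simp (config := { decide := true }) [epsLC]
lemma epsv020 : epsLC 0 2 0 = 0 := by simp (config := { decide := true }) [epsLC]
lemma epsv021 : epsLC 0 2 1 = -1 := by simp (config := { decide := true }) [epsLC]
lemma epsv022 : epsLC 0 2 2 = 0 := by simp (config := { decide := true }) [epsLC]
lemma epsv100 : epsLC 1 0 0 = 0 := by simp (config := { decide := true }) [epsLC]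
lemma epsv101 : epsLC 1 0 1 = 0 := by simp (config := { decide := true }) [epsLC]
lemma epsv102 : epsLC 1 0 2 = -1 := by simp (config := { decide := true }) [epsLC]
lemma epsv110 : epsLC 1 1 0 = 0 := by simp (config := { decide := true }) [epsLC]
lemma epsv111 : epsLC 1 1 1 = 0 := by simp (config := { decide := true }) [epsLC]
lemma epsv112 : epsLC 1 1 2 = 0 := by simp (config := { decide := true }) [epsLC]
lemma epsv120 : epsLC 1 2 0 = 1 := by simp (config := { decide := true }) [epsLC]
lemma epsv121 : epsLC 1 2 1 = 0 := by simp (config := { decide := true }) [epsLC]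
lemma epsv122 : epsLC 1 2 2 = 0 := by simp (config := { decide := true }) [epsLC]
lemma epsv200 : epsLC 2 0 0 = 0 := by simp (config := { decide := true }) [epsLC]
lemma epsv201 : epsLC 2 0 1 = 1 := by simp (config := { decide := true }) [epsLC]
lemma epsv202 : epsLC 2 0 2 = 0 := by simp (config := { decide := true }) [epsLC]
lemma epsv210 : epsLC 2 1 0 = -1 := by simp (config := { decide := true }) [epsLC]
lemma epsv211 : epsLC 2 1 1 = 0 := by simp (config := { decide := true }) [epsLC]
lemma epsv212 : epsLC 2 1 2 = 0 := by simp (config := { decide := true }) [epsLC]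
lemma epsv220 : epsLC 2 2 0 = 0 := by simp (config := { decide := true }) [epsLC]
lemma epsv221 : epsLC 2 2 1 = 0 := by simp (config := { decide := true }) [epsLC]
lemma epsv222 : epsLC 2 2 2 = 0 := by simp (config := { decide := true }) [epsLC]

lemma eps_diag (a : Fin 3) (t : Fin 3 → ℝ) : ∑ γ, epsLC a a γ * t γ = 0 := by
  fin_cases a <;> simp [Fin.sum_univ_three, epsv000, epsv001, epsv002, epsv110, epsv111, epsv112, epsv220, epsv221, epsv222]

section Core
variable {R : Type*} [Ring R] [Algebra ℝ R]

set_option maxHeartbeats 6000000 in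
theorem core (K a b c : Fin 3 → R) (e : Fin 3 → Fin 3 → R)
    (hQ : ∀ α β, K α * K β = (if α = β then (-1:R) else 0) + ∑ γ, epsLC α β γ • K γ)
    (hA : ∀ α β, K α * a β = (∑ γ, epsLC α β γ • a γ) - a α * K β)
    (hE : ∀ δ α β, K α * e δ β = (∑ γ, epsLC α β γ • e δ γ) - e δ α * K β)
    (hC : ∀ α, c α = -(b α * K α))
    (Γ : R)
    (hΓ : Γ = (-(1/6 : ℝ)) • (∑ α, (a α + b α + (1/2:ℝ) • ∑ β, ∑ γ, epsLC α β γ • (e β γ + K β * b γ)) * K α)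
        + (1/12 : ℝ) • (∑ α, (e α α + K α * a α - c α - K α * b α))) :
    ∀ μ, a μ - Γ * K μ + K μ * Γ = 0 := by
  have q00 : K 0 * K 0 = -1 := by have h := hQ 0 0; simp (config := { decide := true }) [Fin.sum_univ_three, epsLC] at h; exact h
  have q00' : ∀ y : R, K 0 * (K 0 * y) = -y := by intro y; rw [← mul_assoc, q00, neg_one_mul]
  have q01 : K 0 * K 1 = K 2 := by have h := hQ 0 1; simp (config := { decide := true }) [Fin.sum_univ_three, epsLC] at h; exact h
  have q01' : ∀ y : R, K 0 * (K 1 * y) = K 2 * y := by intro y; rw [← mul_assoc, q01]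
  have q02 : K 0 * K 2 = -K 1 := by have h := hQ 0 2; simp (config := { decide := true }) [Fin.sum_univ_three, epsLC] at h; exact h
  have q02' : ∀ y : R, K 0 * (K 2 * y) = -(K 1 * y) := by intro y; rw [← mul_assoc, q02, neg_mul]
  have q10 : K 1 * K 0 = -K 2 := by have h := hQ 1 0; simp (config := { decide := true }) [Fin.sum_univ_three, epsLC] at h; exact h
  have q10' : ∀ y : R, K 1 * (K 0 * y) = -(K 2 * y) := by intro y; rw [← mul_assoc, q10, neg_mul]
  have q11 : K 1 * K 1 = -1 := by have h := hQ 1 1; simp (config := { decide := true }) [Fin.sum_univ_three, epsLC] at h; exact h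
  have q11' : ∀ y : R, K 1 * (K 1 * y) = -y := by intro y; rw [← mul_assoc, q11, neg_one_mul]
  have q12 : K 1 * K 2 = K 0 := by have h := hQ 1 2; simp (config := { decide := true }) [Fin.sum_univ_three, epsLC] at h; exact h
  have q12' : ∀ y : R, K 1 * (K 2 * y) = K 0 * y := by intro y; rw [← mul_assoc, q12]
  have q20 : K 2 * K 0 = K 1 := by have h := hQ 2 0; simp (config := { decide := true }) [Fin.sum_univ_three, epsLC] at h; exact h
  have q20' : ∀ y : R, K 2 * (K 0 * y) = K 1 * y := by intro y; rw [← mul_assoc, q20]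
  have q21 : K 2 * K 1 = -K 0 := by have h := hQ 2 1; simp (config := { decide := true }) [Fin.sum_univ_three, epsLC] at h; exact h
  have q21' : ∀ y : R, K 2 * (K 1 * y) = -(K 0 * y) := by intro y; rw [← mul_assoc, q21, neg_mul]
  have q22 : K 2 * K 2 = -1 := by have h := hQ 2 2; simp (config := { decide := true }) [Fin.sum_univ_three, epsLC] at h; exact h
  have q22' : ∀ y : R, K 2 * (K 2 * y) = -y := by intro y; rw [← mul_assoc, q22, neg_one_mul]
  have ar00 : K 0 * a 0 = -(a 0 * K 0) := by have h := hA 0 0; simp (config := { decide := true }) [Fin.sum_univ_three, epsLC] at h; exact h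
  have ar00' : ∀ y : R, K 0 * (a 0 * y) = -(a 0 * (K 0 * y)) := by intro y; rw [← mul_assoc, ar00, neg_mul, mul_assoc]
  have ar01 : K 0 * a 1 = a 2 - a 0 * K 1 := by have h := hA 0 1; simp (config := { decide := true }) [Fin.sum_univ_three, epsLC] at h; exact h
  have ar01' : ∀ y : R, K 0 * (a 1 * y) = a 2 * y - a 0 * (K 1 * y) := by intro y; rw [← mul_assoc, ar01, sub_mul, mul_assoc]
  have ar02 : K 0 * a 2 = -a 1 - a 0 * K 2 := by have h := hA 0 2; simp (config := { decide := true }) [Fin.sum_univ_three, epsLC] at h; exact h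
  have ar02' : ∀ y : R, K 0 * (a 2 * y) = -a 1 * y - a 0 * (K 2 * y) := by intro y; rw [← mul_assoc, ar02, sub_mul, mul_assoc]
  have ar10 : K 1 * a 0 = -a 2 - a 1 * K 0 := by have h := hA 1 0; simp (config := { decide := true }) [Fin.sum_univ_three, epsLC] at h; exact h
  have ar10' : ∀ y : R, K 1 * (a 0 * y) = -a 2 * y - a 1 * (K 0 * y) := by intro y; rw [← mul_assoc, ar10, sub_mul, mul_assoc]
  have ar11 : K 1 * a 1 = -(a 1 * K 1) := by have h := hA 1 1; simp (config := { decide := true }) [Fin.sum_univ_three, epsLC] at h; exact h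
  have ar11' : ∀ y : R, K 1 * (a 1 * y) = -(a 1 * (K 1 * y)) := by intro y; rw [← mul_assoc, ar11, neg_mul, mul_assoc]
  have ar12 : K 1 * a 2 = a 0 - a 1 * K 2 := by have h := hA 1 2; simp (config := { decide := true }) [Fin.sum_univ_three, epsLC] at h; exact h
  have ar12' : ∀ y : R, K 1 * (a 2 * y) = a 0 * y - a 1 * (K 2 * y) := by intro y; rw [← mul_assoc, ar12, sub_mul, mul_assoc]
  have ar20 : K 2 * a 0 = a 1 - a 2 * K 0 := by have h := hA 2 0; simp (config := { decide := true }) [Fin.sum_univ_three, epsLC] at h; exact h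
  have ar20' : ∀ y : R, K 2 * (a 0 * y) = a 1 * y - a 2 * (K 0 * y) := by intro y; rw [← mul_assoc, ar20, sub_mul, mul_assoc]
  have ar21 : K 2 * a 1 = -a 0 - a 2 * K 1 := by have h := hA 2 1; simp (config := { decide := true }) [Fin.sum_univ_three, epsLC] at h; exact h
  have ar21' : ∀ y : R, K 2 * (a 1 * y) = -a 0 * y - a 2 * (K 1 * y) := by intro y; rw [← mul_assoc, ar21, sub_mul, mul_assoc]
  have ar22 : K 2 * a 2 = -(a 2 * K 2) := by have h := hA 2 2; simp (config := { decide := true }) [Fin.sum_univ_three, epsLC] at h; exact h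
  have ar22' : ∀ y : R, K 2 * (a 2 * y) = -(a 2 * (K 2 * y)) := by intro y; rw [← mul_assoc, ar22, neg_mul, mul_assoc]
  have er000 : K 0 * e 0 0 = -(e 0 0 * K 0) := by have h := hE 0 0 0; simp (config := { decide := true }) [Fin.sum_univ_three, epsLC] at h; exact h
  have er000' : ∀ y : R, K 0 * (e 0 0 * y) = -(e 0 0 * (K 0 * y)) := by intro y; rw [← mul_assoc, er000, neg_mul, mul_assoc]
  have er001 : K 0 * e 0 1 = e 0 2 - e 0 0 * K 1 := by have h := hE 0 0 1; simp (config := { decide := true }) [Fin.sum_univ_three, epsLC] at h; exact h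
  have er001' : ∀ y : R, K 0 * (e 0 1 * y) = e 0 2 * y - e 0 0 * (K 1 * y) := by intro y; rw [← mul_assoc, er001, sub_mul, mul_assoc]
  have er002 : K 0 * e 0 2 = -e 0 1 - e 0 0 * K 2 := by have h := hE 0 0 2; simp (config := { decide := true }) [Fin.sum_univ_three, epsLC] at h; exact h
  have er002' : ∀ y : R, K 0 * (e 0 2 * y) = -e 0 1 * y - e 0 0 * (K 2 * y) := by intro y; rw [← mul_assoc, er002, sub_mul, mul_assoc]
  have er010 : K 1 * e 0 0 = -e 0 2 - e 0 1 * K 0 := by have h := hE 0 1 0; simp (config := { decide := true }) [Fin.sum_univ_three, epsLC] at h; exact h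
  have er010' : ∀ y : R, K 1 * (e 0 0 * y) = -e 0 2 * y - e 0 1 * (K 0 * y) := by intro y; rw [← mul_assoc, er010, sub_mul, mul_assoc]
  have er011 : K 1 * e 0 1 = -(e 0 1 * K 1) := by have h := hE 0 1 1; simp (config := { decide := true }) [Fin.sum_univ_three, epsLC] at h; exact h
  have er011' : ∀ y : R, K 1 * (e 0 1 * y) = -(e 0 1 * (K 1 * y)) := by intro y; rw [← mul_assoc, er011, neg_mul, mul_assoc]
  have er012 : K 1 * e 0 2 = e 0 0 - e 0 1 * K 2 := by have h := hE 0 1 2; simp (config := { decide := true }) [Fin.sum_univ_three, epsLC] at h; exact h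
  have er012' : ∀ y : R, K 1 * (e 0 2 * y) = e 0 0 * y - e 0 1 * (K 2 * y) := by intro y; rw [← mul_assoc, er012, sub_mul, mul_assoc]
  have er020 : K 2 * e 0 0 = e 0 1 - e 0 2 * K 0 := by have h := hE 0 2 0; simp (config := { decide := true }) [Fin.sum_univ_three, epsLC] at h; exact h
  have er020' : ∀ y : R, K 2 * (e 0 0 * y) = e 0 1 * y - e 0 2 * (K 0 * y) := by intro y; rw [← mul_assoc, er020, sub_mul, mul_assoc]
  have er021 : K 2 * e 0 1 = -e 0 0 - e 0 2 * K 1 := by have h := hE 0 2 1; simp (config := { decide := true }) [Fin.sum_univ_three, epsLC] at h; exact h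
  have er021' : ∀ y : R, K 2 * (e 0 1 * y) = -e 0 0 * y - e 0 2 * (K 1 * y) := by intro y; rw [← mul_assoc, er021, sub_mul, mul_assoc]
  have er022 : K 2 * e 0 2 = -(e 0 2 * K 2) := by have h := hE 0 2 2; simp (config := { decide := true }) [Fin.sum_univ_three, epsLC] at h; exact h
  have er022' : ∀ y : R, K 2 * (e 0 2 * y) = -(e 0 2 * (K 2 * y)) := by intro y; rw [← mul_assoc, er022, neg_mul, mul_assoc]
  have er100 : K 0 * e 1 0 = -(e 1 0 * K 0) := by have h := hE 1 0 0; simp (config := { decide := true }) [Fin.sum_univ_three, epsLC] at h; exact h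
  have er100' : ∀ y : R, K 0 * (e 1 0 * y) = -(e 1 0 * (K 0 * y)) := by intro y; rw [← mul_assoc, er100, neg_mul, mul_assoc]
  have er101 : K 0 * e 1 1 = e 1 2 - e 1 0 * K 1 := by have h := hE 1 0 1; simp (config := { decide := true }) [Fin.sum_univ_three, epsLC] at h; exact h
  have er101' : ∀ y : R, K 0 * (e 1 1 * y) = e 1 2 * y - e 1 0 * (K 1 * y) := by intro y; rw [← mul_assoc, er101, sub_mul, mul_assoc]
  have er102 : K 0 * e 1 2 = -e 1 1 - e 1 0 * K 2 := by have h := hE 1 0 2; simp (config := { decide := true }) [Fin.sum_univ_three, epsLC] at h; exact h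
  have er102' : ∀ y : R, K 0 * (e 1 2 * y) = -e 1 1 * y - e 1 0 * (K 2 * y) := by intro y; rw [← mul_assoc, er102, sub_mul, mul_assoc]
  have er110 : K 1 * e 1 0 = -e 1 2 - e 1 1 * K 0 := by have h := hE 1 1 0; simp (config := { decide := true }) [Fin.sum_univ_three, epsLC] at h; exact h
  have er110' : ∀ y : R, K 1 * (e 1 0 * y) = -e 1 2 * y - e 1 1 * (K 0 * y) := by intro y; rw [← mul_assoc, er110, sub_mul, mul_assoc]
  have er111 : K 1 * e 1 1 = -(e 1 1 * K 1) := by have h := hE 1 1 1; simp (config := { decide := true }) [Fin.sum_univ_three, epsLC] at h; exact h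
  have er111' : ∀ y : R, K 1 * (e 1 1 * y) = -(e 1 1 * (K 1 * y)) := by intro y; rw [← mul_assoc, er111, neg_mul, mul_assoc]
  have er112 : K 1 * e 1 2 = e 1 0 - e 1 1 * K 2 := by have h := hE 1 1 2; simp (config := { decide := true }) [Fin.sum_univ_three, epsLC] at h; exact h
  have er112' : ∀ y : R, K 1 * (e 1 2 * y) = e 1 0 * y - e 1 1 * (K 2 * y) := by intro y; rw [← mul_assoc, er112, sub_mul, mul_assoc]
  have er120 : K 2 * e 1 0 = e 1 1 - e 1 2 * K 0 := by have h := hE 1 2 0; simp (config := { decide := true }) [Fin.sum_univ_three, epsLC] at h; exact h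
  have er120' : ∀ y : R, K 2 * (e 1 0 * y) = e 1 1 * y - e 1 2 * (K 0 * y) := by intro y; rw [← mul_assoc, er120, sub_mul, mul_assoc]
  have er121 : K 2 * e 1 1 = -e 1 0 - e 1 2 * K 1 := by have h := hE 1 2 1; simp (config := { decide := true }) [Fin.sum_univ_three, epsLC] at h; exact h
  have er121' : ∀ y : R, K 2 * (e 1 1 * y) = -e 1 0 * y - e 1 2 * (K 1 * y) := by intro y; rw [← mul_assoc, er121, sub_mul, mul_assoc]
  have er122 : K 2 * e 1 2 = -(e 1 2 * K 2) := by have h := hE 1 2 2; simp (config := { decide := true }) [Fin.sum_univ_three, epsLC] at h; exact h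
  have er122' : ∀ y : R, K 2 * (e 1 2 * y) = -(e 1 2 * (K 2 * y)) := by intro y; rw [← mul_assoc, er122, neg_mul, mul_assoc]
  have er200 : K 0 * e 2 0 = -(e 2 0 * K 0) := by have h := hE 2 0 0; simp (config := { decide := true }) [Fin.sum_univ_three, epsLC] at h; exact h
  have er200' : ∀ y : R, K 0 * (e 2 0 * y) = -(e 2 0 * (K 0 * y)) := by intro y; rw [← mul_assoc, er200, neg_mul, mul_assoc]
  have er201 : K 0 * e 2 1 = e 2 2 - e 2 0 * K 1 := by have h := hE 2 0 1; simp (config := { decide := true }) [Fin.sum_univ_three, epsLC] at h; exact h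
  have er201' : ∀ y : R, K 0 * (e 2 1 * y) = e 2 2 * y - e 2 0 * (K 1 * y) := by intro y; rw [← mul_assoc, er201, sub_mul, mul_assoc]
  have er202 : K 0 * e 2 2 = -e 2 1 - e 2 0 * K 2 := by have h := hE 2 0 2; simp (config := { decide := true }) [Fin.sum_univ_three, epsLC] at h; exact h
  have er202' : ∀ y : R, K 0 * (e 2 2 * y) = -e 2 1 * y - e 2 0 * (K 2 * y) := by intro y; rw [← mul_assoc, er202, sub_mul, mul_assoc]
  have er210 : K 1 * e 2 0 = -e 2 2 - e 2 1 * K 0 := by have h := hE 2 1 0; simp (config := { decide := true }) [Fin.sum_univ_three, epsLC] at h; exact h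
  have er210' : ∀ y : R, K 1 * (e 2 0 * y) = -e 2 2 * y - e 2 1 * (K 0 * y) := by intro y; rw [← mul_assoc, er210, sub_mul, mul_assoc]
  have er211 : K 1 * e 2 1 = -(e 2 1 * K 1) := by have h := hE 2 1 1; simp (config := { decide := true }) [Fin.sum_univ_three, epsLC] at h; exact h
  have er211' : ∀ y : R, K 1 * (e 2 1 * y) = -(e 2 1 * (K 1 * y)) := by intro y; rw [← mul_assoc, er211, neg_mul, mul_assoc]
  have er212 : K 1 * e 2 2 = e 2 0 - e 2 1 * K 2 := by have h := hE 2 1 2; simp (config := { decide := true }) [Fin.sum_univ_three, epsLC] at h; exact h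
  have er212' : ∀ y : R, K 1 * (e 2 2 * y) = e 2 0 * y - e 2 1 * (K 2 * y) := by intro y; rw [← mul_assoc, er212, sub_mul, mul_assoc]
  have er220 : K 2 * e 2 0 = e 2 1 - e 2 2 * K 0 := by have h := hE 2 2 0; simp (config := { decide := true }) [Fin.sum_univ_three, epsLC] at h; exact h
  have er220' : ∀ y : R, K 2 * (e 2 0 * y) = e 2 1 * y - e 2 2 * (K 0 * y) := by intro y; rw [← mul_assoc, er220, sub_mul, mul_assoc]
  have er221 : K 2 * e 2 1 = -e 2 0 - e 2 2 * K 1 := by have h := hE 2 2 1; simp (config := { decide := true }) [Fin.sum_univ_three, epsLC] at h; exact h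
  have er221' : ∀ y : R, K 2 * (e 2 1 * y) = -e 2 0 * y - e 2 2 * (K 1 * y) := by intro y; rw [← mul_assoc, er221, sub_mul, mul_assoc]
  have er222 : K 2 * e 2 2 = -(e 2 2 * K 2) := by have h := hE 2 2 2; simp (config := { decide := true }) [Fin.sum_univ_three, epsLC] at h; exact h
  have er222' : ∀ y : R, K 2 * (e 2 2 * y) = -(e 2 2 * (K 2 * y)) := by intro y; rw [← mul_assoc, er222, neg_mul, mul_assoc]
  have H0 : a 0 - Γ * K 0 + K 0 * Γ = 0 := by
    rw [hΓ]
    simp only [hC, Fin.sum_univ_three, epsv000, epsv001, epsv002, epsv010, epsv011, epsv012, epsv020, epsv021, epsv022, epsv100, epsv101, epsv102, epsv110, epsv111, epsv112, epsv120, epsv121, epsv122, epsv200, epsv201, epsv202, epsv210, epsv211, epsv212, epsv220, epsv221, epsv222, q00, q00', q01, q01', q02, q02', q10, q10', q11, q11', q12, q12', q20, q20', q21, q21', q22, q22', ar00, ar00', ar01, ar01', ar02, ar02', ar10, ar10', ar11, ar11', ar12, ar12', ar20, ar20', ar21, ar21', ar22, ar22', er000, er000', er001, er001', er002, er002', er010,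 er010', er011, er011', er012, er012', er020, er020', er021, er021', er022, er022', er100, er100', er101, er101', er102, er102', er110, er110', er111, er111', er112, er112', er120, er120', er121, er121', er122, er122', er200, er200', er201, er201', er202, er202', er210, er210', er211, er211', er212, er212', er220, er220', er221, er221', er222, er222', zero_smul, one_smul, neg_one_smul, smul_add, smul_sub, smul_neg, add_mul, mul_add, sub_mul, mul_sub, neg_mul, mul_neg, smul_mul_assoc, mul_smul_comm, mul_assoc, mul_one, one_mul, neg_neg, add_zero, zero_add, zero_mul, mul_zero, sub_zero, zero_sub, smul_zero, smul_smul]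
    module
  have H1 : a 1 - Γ * K 1 + K 1 * Γ = 0 := by
    rw [hΓ]
    simp only [hC, Fin.sum_univ_three, epsv000, epsv001, epsv002, epsv010, epsv011, epsv012, epsv020, epsv021, epsv022, epsv100, epsv101, epsv102, epsv110, epsv111, epsv112, epsv120, epsv121, epsv122, epsv200, epsv201, epsv202, epsv210, epsv211, epsv212, epsv220, epsv221, epsv222, q00, q00', q01, q01', q02, q02', q10, q10', q11, q11', q12, q12', q20, q20', q21, q21', q22, q22', ar00, ar00', ar01, ar01', ar02, ar02', ar10, ar10', ar11, ar11', ar12, ar12', ar20, ar20', ar21, ar21', ar22, ar22', er000, er000', er001, er001', er002, er002', er010, er010', er011, er011', er012, er012', er020, er020', er021, er021', er022, er022', er100, er100', er101, er101', er102, er102', er110, er110', er111, er111', er112, er112', er120, er120', er121, er121', er122, er122', er200, er200', er201, er201', er202, er202', er210, er210', er211, er211', er212, er212', er220, er220', er221, er221', er222, er222', zero_smul, one_smul, neg_one_smul, smul_add, smul_sub, smul_neg, add_mul, mul_add, sub_mul, mul_sub, neg_mul, mul_neg, smul_mul_assoc, mul_smul_comm, mul_assoc, mul_one, one_mul, neg_neg,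 add_zero, zero_add, zero_mul, mul_zero, sub_zero, zero_sub, smul_zero, smul_smul]
    module
  have H2 : a 2 - Γ * K 2 + K 2 * Γ = 0 := by
    rw [hΓ]
    simp only [hC, Fin.sum_univ_three, epsv000, epsv001, epsv002, epsv010, epsv011, epsv012, epsv020, epsv021, epsv022, epsv100, epsv101, epsv102, epsv110, epsv111, epsv112, epsv120, epsv121, epsv122, epsv200, epsv201, epsv202, epsv210, epsv211, epsv212, epsv220, epsv221, epsv222, q00, q00', q01, q01', q02, q02', q10, q10', q11, q11', q12, q12', q20, q20', q21, q21', q22, q22', ar00, ar00', ar01, ar01', ar02, ar02', ar10, ar10', ar11, ar11', ar12, ar12', ar20, ar20', ar21, ar21', ar22, ar22', er000, er000', er001, er001', er002, er002', er010, er010', er011, er011', er012, er012', er020, er020', er021, er021', er022, er022', er100, er100', er101, er101', er102, er102', er110, er110', er111, er111', er112, er112', er120, er120', er121, er121', er122, er122', er200, er200', er201, er201', er202, er202', er210, er210', er211, er211', er212, er212', er220, er220', er221, er221', er222, er222', zero_smul, one_smul, neg_one_smul, smul_add, smul_sub, smul_neg, add_mul, mul_add, sub_mul, mul_sub, neg_mul,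 mul_neg, smul_mul_assoc, mul_smul_comm, mul_assoc, mul_one, one_mul, neg_neg, add_zero, zero_add, zero_mul, mul_zero, sub_zero, zero_sub, smul_zero, smul_smul]
    module
  intro μ
  fin_cases μ
  · exact H0
  · exact H1
  · exact H2

end Core

section Bridge
variable {n : ℕ} {J : Fin 3 → Fin n → Fin n → (Fin n → ℝ) → ℝ} {U : Set (Fin n → ℝ)}

theorem key_dq (hU : IsOpen U) (hJ : IsAlmostHypercomplexOn J U) {x : Fin n → ℝ} (hx : x ∈ U)
    (d : Fin n) (α β : Fin 3) (P Z : Fin n) :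
    ∑ W, (pd d (J α P W) x * J β W Z x + J α P W x * pd d (J β W Z) x)
      = ∑ γ, epsLC α β γ * pd d (J γ P Z) x := by
  have hdiff : ∀ (a : Fin 3) (Y Z : Fin n), DifferentiableAt ℝ (J a Y Z) x := fun a Y Z =>
    ((hJ.1 a Y Z).contDiffAt (hU.mem_nhds hx)).differentiableAt (by norm_num)
  have h3 : fderiv ℝ (fun y => ∑ W, J α P W y * J β W Z y) x
      = fderiv ℝ (fun y => (if α = β then (-1:ℝ) else 0) * (if P = Z then 1 else 0)
          + ∑ γ, epsLC α β γ * J γ P Z y) x :=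
    Filter.EventuallyEq.fderiv_eq <| Filter.eventuallyEq_of_mem (hU.mem_nhds hx)
      fun y hy => hJ.2 α β P Z y hy
  have h1 : fderiv ℝ (fun y => ∑ W, J α P W y * J β W Z y) x
      = ∑ W, (J α P W x • fderiv ℝ (J β W Z) x + J β W Z x • fderiv ℝ (J α P W) x) := by
    rw [fderiv_fun_sum fun W _ => (hdiff α P W).fun_mul (hdiff β W Z)]
    exact Finset.sum_congr rfl fun W _ => fderiv_fun_mul (hdiff α P W) (hdiff β W Z)
  have h2 : fderiv ℝ (fun y => (if α = β then (-1:ℝ) else 0) * (if P = Z then 1 else 0)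
          + ∑ γ, epsLC α β γ * J γ P Z y) x
      = ∑ γ, epsLC α β γ • fderiv ℝ (J γ P Z) x := by
    rw [fderiv_const_add, fderiv_fun_sum fun γ _ => (hdiff γ P Z).const_mul _]
    exact Finset.sum_congr rfl fun γ _ => fderiv_const_mul (hdiff γ P Z) _
  have hv := congrArg (fun L : (Fin n → ℝ) →L[ℝ] ℝ => L (Pi.single d 1))
    (h1.symm.trans (h3.trans h2))
  simp only [ContinuousLinearMap.coe_sum', Finset.sum_apply, ContinuousLinearMap.add_apply,
    ContinuousLinearMap.coe_smul', Pi.smul_apply, smul_eq_mul] at hv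
  calc ∑ W, (pd d (J α P W) x * J β W Z x + J α P W x * pd d (J β W Z) x)
      = ∑ W, (J α P W x * pd d (J β W Z) x + J β W Z x * pd d (J α P W) x) :=
        Finset.sum_congr rfl fun W _ => by ring
    _ = ∑ γ, epsLC α β γ * pd d (J γ P Z) x := hv

end Bridge

section Mats
variable {n : ℕ} (J : Fin 3 → Fin n → Fin n → (Fin n → ℝ) → ℝ) (x : Fin n → ℝ) (X : Fin n)

def Kmat : Fin 3 → Matrix (Fin n) (Fin n) ℝ := fun a => Matrix.of fun P Q => J a P Q x
def amat : Fin 3 → Matrix (Fin n) (Fin n) ℝ := fun a => Matrix.of fun P Q => pd X (J a P Q) x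
def bmat : Fin 3 → Matrix (Fin n) (Fin n) ℝ := fun a => Matrix.of fun P Q => pd P (J a X Q) x
def cmat : Fin 3 → Matrix (Fin n) (Fin n) ℝ :=
  fun a => Matrix.of fun P Q => ∑ W, J a X W x * pd P (J a W Q) x
def emat : Fin 3 → Fin 3 → Matrix (Fin n) (Fin n) ℝ :=
  fun b g => Matrix.of fun P Q => ∑ u, J b X u x * pd u (J g P Q) x

end Mats

section MatLems
variable {n : ℕ} {J : Fin 3 → Fin n → Fin n → (Fin n → ℝ) → ℝ} {U : Set (Fin n → ℝ)}
  (hU : IsOpen U) (hJ : IsAlmostHypercomplexOn J U) {x : Fin n → ℝ} (hx : x ∈ U) (X : Fin n)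

include hU hJ hx

theorem hQm : ∀ a b, Kmat J x a * Kmat J x b
    = (if a = b then (-1 : Matrix (Fin n) (Fin n) ℝ) else 0) + ∑ γ, epsLC a b γ • Kmat J x γ := by
  intro a b
  ext P Q
  have h := hJ.2 a b P Q x hx
  simp only [Kmat, Matrix.mul_apply, Matrix.add_apply, Matrix.sum_apply, Matrix.smul_apply,
    Matrix.of_apply, smul_eq_mul]
  rw [h]
  congr 1
  split_ifs with h1 <;> simp_all [Matrix.one_apply, Matrix.neg_apply]

theorem hAm : ∀ a b, Kmat J x a * amat J x X b
    = (∑ γ, epsLC a b γ • amat J x X γ) - amat J x X a * Kmat J x b := by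
  intro a b
  ext P Q
  have h := key_dq hU hJ hx X a b P Q
  rw [Finset.sum_add_distrib] at h
  simp only [Kmat, amat, Matrix.mul_apply, Matrix.sub_apply, Matrix.sum_apply, Matrix.smul_apply,
    Matrix.of_apply, smul_eq_mul]
  linarith [h]

theorem hCm : ∀ a, cmat J x X a = -(bmat J x X a * Kmat J x a) := by
  intro a
  ext P Q
  have h := key_dq hU hJ hx P a a X Q
  have h0 : ∑ γ, epsLC a a γ * pd P (J γ X Q) x = 0 := eps_diag a _
  rw [Finset.sum_add_distrib, h0] at h
  simp only [cmat, bmat, Kmat, Matrix.neg_apply, Matrix.mul_apply, Matrix.of_apply]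
  linarith [h]

theorem hEm : ∀ δ a b, Kmat J x a * emat J x X δ b
    = (∑ γ, epsLC a b γ • emat J x X δ γ) - emat J x X δ a * Kmat J x b := by
  intro δ a b
  ext P Q
  have step2 : ∀ u, ∑ W, J a P W x * pd u (J b W Q) x
      = (∑ γ, epsLC a b γ * pd u (J γ P Q) x) - ∑ W, pd u (J a P W) x * J b W Q x := by
    intro u
    have h := key_dq hU hJ hx u a b P Q
    rw [Finset.sum_add_distrib] at h
    linarith [h]
  simp only [Kmat, emat, Matrix.mul_apply, Matrix.sub_apply, Matrix.sum_apply, Matrix.smul_apply,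
    Matrix.of_apply, smul_eq_mul]
  have step1 : ∑ W, J a P W x * ∑ u, J δ X u x * pd u (J b W Q) x
      = ∑ u, J δ X u x * ∑ W, J a P W x * pd u (J b W Q) x := by
    simp only [Finset.mul_sum]
    rw [Finset.sum_comm]
    exact Finset.sum_congr rfl fun u _ => Finset.sum_congr rfl fun W _ => by ring
  rw [step1]
  have step3 : ∑ u, J δ X u x * (∑ W, J a P W x * pd u (J b W Q) x)
      = (∑ u, J δ X u x * ((∑ γ, epsLC a b γ * pd u (J γ P Q) x)))
        - ∑ u, J δ X u x * (∑ W, pd u (J a P W) x * J b W Q x) := by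
    rw [← Finset.sum_sub_distrib]
    refine Finset.sum_congr rfl fun u _ => ?_
    rw [step2 u, mul_sub]
  rw [step3]
  congr 1
  · -- swap Fin 3 and Fin n sums
    simp only [Finset.mul_sum]
    rw [Finset.sum_comm]
    refine Finset.sum_congr rfl fun γ _ => Finset.sum_congr rfl fun u _ => by ring
  · simp only [Finset.mul_sum, Finset.sum_mul]
    rw [Finset.sum_comm]
    exact Finset.sum_congr rfl fun W _ => Finset.sum_congr rfl fun u _ => by ring

end MatLems

section Gm
variable {n : ℕ}

theorem hGm (J : Fin 3 → Fin n → Fin n → (Fin n → ℝ) → ℝ) (x : Fin n → ℝ) (X : Fin n) :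
    (Matrix.of fun P Q => obata J X P Q x + nijenhuis J X P Q x : Matrix (Fin n) (Fin n) ℝ)
    = (-(1/6 : ℝ)) • (∑ a, (amat J x X a + bmat J x X a
          + (1/2:ℝ) • ∑ b, ∑ g, epsLC a b g • (emat J x X b g + Kmat J x b * bmat J x X g)) * Kmat J x a)
      + (1/12 : ℝ) • (∑ a, (emat J x X a a + Kmat J x a * amat J x X a - cmat J x X a
          - Kmat J x a * bmat J x X a)) := by
  ext P Q
  simp only [obata, nijenhuis, Kmat, amat, bmat, cmat, emat, Matrix.of_apply, Matrix.add_apply,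
    Matrix.smul_apply, Matrix.sum_apply, Matrix.sub_apply, Matrix.mul_apply, smul_eq_mul]
  congr 1
  congr 1
  refine Finset.sum_congr rfl fun a _ => ?_
  simp only [mul_sub, Finset.sum_sub_distrib]
  ring

end Gm

/-- for any almost hypercomplex structure `J` on an open `U ⊆ ℝ^{4r}`, the
torsionful connection `Γ = Γ^{Ob} + N` (Obata plus Nijenhuis torsion) makes the three
complex structures covariantly constant:
`∂_X J^α_Y^Z − Γ_{XY}^W J^α_W^Z + Γ_{XW}^Z J^α_Y^W = 0` on `U`. -/
theorem stmt_5 (r : ℕ) (U : Set (Fin (4 * r) → ℝ)) (hU : IsOpen U)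
    (J : Fin 3 → Fin (4 * r) → Fin (4 * r) → (Fin (4 * r) → ℝ) → ℝ)
    (hJ : IsAlmostHypercomplexOn J U) :
    ∀ α X Y Z, ∀ x ∈ U,
      pd X (J α Y Z) x
        - (∑ W, (obata J X Y W x + nijenhuis J X Y W x) * J α W Z x)
        + (∑ W, (obata J X W Z x + nijenhuis J X W Z x) * J α Y W x) = 0 := by
  intro α X Y Z x hx
  have hcore := core (Kmat J x) (amat J x X) (bmat J x X) (cmat J x X) (emat J x X)
    (hQm hU hJ hx) (hAm hU hJ hx X) (hEm hU hJ hx X) (hCm hU hJ hx X)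
    (Matrix.of fun P Q => obata J X P Q x + nijenhuis J X P Q x) (hGm J x X) α
  have h : (amat J x X α
      - (Matrix.of fun P Q => obata J X P Q x + nijenhuis J X P Q x) * Kmat J x α
      + Kmat J x α * (Matrix.of fun P Q => obata J X P Q x + nijenhuis J X P Q x)) Y Z
      = (0 : Matrix (Fin (4 * r)) (Fin (4 * r)) ℝ) Y Z := by rw [hcore]
  simp only [Matrix.sub_apply, Matrix.add_apply, Matrix.mul_apply, Matrix.of_apply,
    Matrix.zero_apply, amat, Kmat] at h
  have flip : ∑ W, J α Y W x * (obata J X W Z x + nijenhuis J X W Z x)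
      = ∑ W, (obata J X W Z x + nijenhuis J X W Z x) * J α Y W x :=
    Finset.sum_congr rfl fun W _ => mul_comm _ _
  rw [flip] at h
  exact h
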